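/- Let I = [a,b] ⊂ ℝ, x,y ∈ ℝ with x ≠ y, and f = D_{x,y} the Dirichlet-type function: f(t) = x if t ∈ I∩ℚ, f(t) = y otherwise. Then V_ε(f,I) = ∞ for 0 < ε < |x−y|/2, and V_ε(f,I) = 0 for ε ≥ |x−y|/2. -/

import Mathlib

open Filter Set
open scoped ENNReal Topology

/-- The approximate (ε-)variation: infimum of Jordan variations of functions of
bounded variation uniformly ε-close to `f` on `T` (⊤ if no such function). -/
noncomputable def approxVar {M : Type*} [MetricSpace M] (f : ℝ → M) (T : Set ℝ) (ε : ℝ) : ℝ≥0∞ :=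
  ⨅ (g : ℝ → M) (_ : eVariationOn g T ≠ ⊤ ∧ ∀ t ∈ T, dist (f t) (g t) ≤ ε),
    eVariationOn g T

/-- The oscillation (diameter of the image) of `f` on `T`, valued in `[0,∞]`. -/
noncomputable def oscOn {M : Type*} [MetricSpace M] (f : ℝ → M) (T : Set ℝ) : ℝ≥0∞ :=
  ⨆ s ∈ T, ⨆ t ∈ T, edist (f s) (f t)

theorem approxVar_dirichlet {a b x y : ℝ} (hab : a < b) (hxy : x ≠ y) (f : ℝ → ℝ)
    (hfq : ∀ t ∈ Set.Icc a b, (∃ q : ℚ, (q : ℝ) = t) → f t = x)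
    (hfi : ∀ t ∈ Set.Icc a b, (¬∃ q : ℚ, (q : ℝ) = t) → f t = y) (ε : ℝ) :
    (0 < ε → ε < |x - y| / 2 → approxVar f (Set.Icc a b) ε = ⊤) ∧
    (|x - y| / 2 ≤ ε → approxVar f (Set.Icc a b) ε = 0) := by
  constructor
  · intro hε hεlt
    simp only [approxVar, iInf_eq_top]
    rintro g ⟨hne, hclose⟩
    exfalso
    -- the strictly increasing sequence of cut points
    set c : ℕ → ℝ := fun i => b - (b - a) / 2 ^ i with hc
    have hba : (0 : ℝ) < b - a := by linarith
    have hcmono : StrictMono c := by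
      intro i j hij
      have : (b - a) / 2 ^ j < (b - a) / 2 ^ i := by
        apply div_lt_div_of_pos_left hba (by positivity)
        exact pow_lt_pow_right₀ one_lt_two hij
      simp only [hc]
      linarith
    have hca : ∀ i, a ≤ c i := by
      intro i
      have h1 : (b - a) / 2 ^ i ≤ (b - a) / 1 := by
        apply div_le_div_of_nonneg_left hba.le one_pos
        exact one_le_pow₀ one_le_two
      simp only [hc]
      rw [div_one] at h1
      linarith
    have hcb : ∀ i, c i < b := by
      intro i
      have : (0:ℝ) < (b - a) / 2 ^ i := by positivity
      simp only [hc]; linarith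
    -- choose alternating rational / irrational points
    have hex : ∀ i : ℕ, ∃ t : ℝ, t ∈ Set.Ioo (c i) (c (i + 1)) ∧
        ((Even i → ∃ q : ℚ, (q : ℝ) = t) ∧ (¬Even i → ¬∃ q : ℚ, (q : ℝ) = t)) := by
      intro i
      have hlt : c i < c (i + 1) := hcmono (Nat.lt_succ_self i)
      by_cases hi : Even i
      · obtain ⟨q, hq1, hq2⟩ := exists_rat_btwn hlt
        exact ⟨q, ⟨hq1, hq2⟩, fun _ => ⟨q, rfl⟩, fun h => absurd hi h⟩
      · obtain ⟨r, hr, hr1, hr2⟩ := exists_irrational_btwn hlt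
        refine ⟨r, ⟨hr1, hr2⟩, fun h => absurd h hi, fun _ h => ?_⟩
        obtain ⟨q, hq⟩ := h
        exact hr ⟨q, hq⟩
    choose u hu hrat hirr using hex
    have humem : ∀ i, u i ∈ Set.Icc a b := fun i =>
      ⟨(hca i).trans (hu i).1.le, ((hu i).2.trans (hcb (i + 1))).le⟩
    have humono : StrictMono u := strictMono_nat_of_lt_succ fun i =>
      (hu i).2.trans (hu (i + 1)).1
    -- f alternates between x and y on u
    have hfu : ∀ i, f (u i) = if Even i then x else y := by
      intro i
      by_cases hi : Even i
      · simp only [hi, if_true]; exact hfq _ (humem i) (hrat i hi)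
      · simp only [hi, if_false]; exact hfi _ (humem i) (hirr i hi)
    set δ : ℝ := |x - y| - 2 * ε with hδ
    have hδpos : 0 < δ := by
      have := abs_pos.mpr (sub_ne_zero.mpr hxy)
      simp only [hδ]; linarith
    have hkey : ∀ i : ℕ, ENNReal.ofReal δ ≤ edist (g (u (i + 1))) (g (u i)) := by
      intro i
      rw [edist_dist]
      apply ENNReal.ofReal_le_ofReal
      have hdistf : dist (f (u (i + 1))) (f (u i)) = |x - y| := by
        rw [hfu i, hfu (i + 1)]
        by_cases hi : Even i
        · have hi1 : ¬ Even (i + 1) := by simp [Nat.even_add_one, hi]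
          simp only [hi, hi1, if_true, if_false]
          rw [Real.dist_eq, abs_sub_comm]
        · have hi1 : Even (i + 1) := by simp [Nat.even_add_one, hi]
          simp only [hi, hi1, if_true, if_false]
          rw [Real.dist_eq]
      have h1 := hclose _ (humem i)
      have h2 := hclose _ (humem (i + 1))
      have htri : dist (f (u (i + 1))) (f (u i)) ≤
          dist (f (u (i + 1))) (g (u (i + 1))) + dist (g (u (i + 1))) (g (u i))
            + dist (g (u i)) (f (u i)) := dist_triangle4 _ _ _ _
      rw [hdistf] at htri
      rw [dist_comm] at h1
      simp only [hδ]
      linarith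
    have hsum : ∀ n : ℕ, (n : ℝ≥0∞) * ENNReal.ofReal δ ≤ eVariationOn g (Set.Icc a b) := by
      intro n
      calc (n : ℝ≥0∞) * ENNReal.ofReal δ
          = ∑ _i ∈ Finset.range n, ENNReal.ofReal δ := by
            rw [Finset.sum_const, Finset.card_range, nsmul_eq_mul]
        _ ≤ ∑ i ∈ Finset.range n, edist (g (u (i + 1))) (g (u i)) :=
            Finset.sum_le_sum fun i _ => hkey i
        _ ≤ eVariationOn g (Set.Icc a b) :=
            eVariationOn.sum_le (f := g) (n := n) humono.monotone humem
    set V := eVariationOn g (Set.Icc a b)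
    have hd0 : ENNReal.ofReal δ ≠ 0 := by
      simp [ENNReal.ofReal_eq_zero, not_le, hδpos]
    have hdiv : V / ENNReal.ofReal δ < ⊤ :=
      ENNReal.div_lt_top hne hd0
    obtain ⟨n, hn⟩ := ENNReal.exists_nat_gt hdiv.ne
    have : V < (n : ℝ≥0∞) * ENNReal.ofReal δ := by
      rw [ENNReal.div_lt_iff (Or.inl hd0) (Or.inl ENNReal.ofReal_ne_top)] at hn
      exact hn
    exact absurd (hsum n) (not_le.mpr this)
  · intro hle
    apply le_antisymm _ zero_le
    have hconst : eVariationOn (fun _ : ℝ => (x + y) / 2) (Set.Icc a b) = 0 :=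
      eVariationOn.constant_on (by
        rintro s ⟨_, _, rfl⟩ t ⟨_, _, rfl⟩; rfl)
    have hclose : ∀ t ∈ Set.Icc a b, dist (f t) ((x + y) / 2) ≤ ε := by
      intro t ht
      by_cases hq : ∃ q : ℚ, (q : ℝ) = t
      · rw [hfq t ht hq, Real.dist_eq]
        have : x - (x + y) / 2 = (x - y) / 2 := by ring
        rw [this, abs_div, abs_two]
        exact hle
      · rw [hfi t ht hq, Real.dist_eq]
        have : y - (x + y) / 2 = -((x - y) / 2) := by ring
        rw [this, abs_neg, abs_div, abs_two]
        exact hle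
    calc approxVar f (Set.Icc a b) ε
        ≤ eVariationOn (fun _ : ℝ => (x + y) / 2) (Set.Icc a b) := by
          apply iInf_le_of_le (fun _ => (x + y) / 2)
          exact iInf_le_of_le ⟨by rw [hconst]; exact ENNReal.zero_ne_top, hclose⟩ le_rfl
      _ = 0 := hconst
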